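/- If P is a closed λ-term such that (P b_{n+1}) ≃β bₙ for all n ∈ ℕ (a Predecessor for the numeral system b), then the closed λ-term P' = λn.(P <F, n> T) is a Zero Test for the numeral system a, i.e. (P' a₀) ≃β T and (P' a_{n+1}) ≃β F for all n ∈ ℕ. Consequently the numeral system b has no Predecessor. -/

import Mathlib

/-- Untyped λ-terms in de Bruijn notation. -/
inductive Lam : Type
  | var : ℕ → Lam
  | app : Lam → Lam → Lam
  | lam : Lam → Lam
  deriving DecidableEq

namespace Lam

/-- Shift by one the free variables with index ≥ `d`. -/
def lift (d : ℕ) : Lam → Lam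
  | var n => if n < d then var n else var (n + 1)
  | app M N => app (lift d M) (lift d N)
  | lam M => lam (lift (d + 1) M)

/-- Capture-avoiding substitution of `N` for the free variable of index `n`. -/
def subst : Lam → ℕ → Lam → Lam
  | var m, n, N => if m = n then N else if n < m then var (m - 1) else var m
  | app M₁ M₂, n, N => app (subst M₁ n N) (subst M₂ n N)
  | lam M, n, N => lam (subst M (n + 1) (lift 0 N))

/-- One-step β-reduction (contraction of a β-redex anywhere in the term). -/
inductive Step : Lam → Lam → Prop
  | beta (M N : Lam) : Step (app (lam M) N) (subst M 0 N)
  | appL {M M' : Lam} (N : Lam) : Step M M' → Step (app M N) (app M' N)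
  | appR (M : Lam) {N N' : Lam} : Step N N' → Step (app M N) (app M N')
  | lam {M M' : Lam} : Step M M' → Step (Lam.lam M) (Lam.lam M')

/-- β-equivalence: the equivalence relation generated by one-step β-reduction. -/
def BetaEq : Lam → Lam → Prop := Relation.EqvGen Step

/-- The variable of index `n` occurs free in the term. -/
def HasFree : Lam → ℕ → Prop
  | var m, n => m = n
  | app M N, n => HasFree M n ∨ HasFree N n
  | lam M, n => HasFree M (n + 1)

/-- A term is closed if it has no free variables. -/
def Closed (M : Lam) : Prop := ∀ n, ¬ HasFree M n

/-- A term is β-normal: it contains no β-redex. -/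
def IsBetaNormal : Lam → Prop
  | app (lam _) _ => False
  | app M N => IsBetaNormal M ∧ IsBetaNormal N
  | lam M => IsBetaNormal M
  | var _ => True

/-- A term is βη-normal: it contains no β-redex and no η-redex
`λx.(M x)` with `x` not free in `M`. -/
def IsBetaEtaNormal : Lam → Prop
  | app (lam _) _ => False
  | app M N => IsBetaEtaNormal M ∧ IsBetaEtaNormal N
  | lam (app M (var 0)) => HasFree M 0 ∧ IsBetaEtaNormal (app M (var 0))
  | lam M => IsBetaEtaNormal M
  | var _ => True

/-- `I = λx.x`. -/
def I : Lam := lam (var 0)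

/-- `T = λxλy.x`. -/
def T : Lam := lam (lam (var 1))

/-- `F = λxλy.y`. -/
def F : Lam := lam (lam (var 0))

/-- The pair `<M,N> = λx.(x M N)` (the binder shifts the free variables of `M,N`). -/
def pair (M N : Lam) : Lam := lam (app (app (var 0) (lift 0 M)) (lift 0 N))

end Lam

/-- The numeral system `a` : `aₙ = λx₁…λxₙ.I` (so `a₀ = I`). -/
def Lam.sysA : ℕ → Lam
  | 0 => Lam.I
  | n + 1 => Lam.lam (Lam.sysA n)

/-- The numeral system `b` : `b₀ = <T, I>` and `bₙ = <F, a_{n-1}>` for `n ≥ 1`. -/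
def Lam.sysB : ℕ → Lam
  | 0 => Lam.pair Lam.T Lam.I
  | n + 1 => Lam.pair Lam.F (Lam.sysA n)

namespace Lam

set_option linter.unreachableTactic false
set_option linter.unusedTactic false

theorem lift_lift (M : Lam) : ∀ i k, i ≤ k →
    lift (k + 1) (lift i M) = lift i (lift k M) := by
  induction M with
  | var n =>
    intro i k h
    simp only [lift]
    split_ifs <;> simp_all [lift] <;> (try split_ifs) <;>
      first | omega | rfl | (congr 1; omega)
  | app A B ihA ihB => intro i k h; simp [lift, ihA _ _ h, ihB _ _ h]
  | lam A ih => intro i k h; simp [lift, ih (i+1) (k+1) (by omega)]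

theorem lift_subst (M : Lam) : ∀ N i j, j ≤ i →
    lift i (subst M j N) = subst (lift (i + 1) M) j (lift i N) := by
  induction M with
  | var m =>
    intro N i j h
    simp only [subst, lift]
    split_ifs <;> simp_all [lift, subst] <;> (try split_ifs) <;>
      first | omega | rfl | (congr 1; omega)
  | app A B ihA ihB => intro N i j h; simp [lift, subst, ihA _ _ _ h, ihB _ _ _ h]
  | lam A ih =>
    intro N i j h
    simp only [lift, subst]
    rw [ih _ (i+1) (j+1) (by omega), lift_lift _ 0 i (by omega)]

theorem lift_subst_lt (M : Lam) : ∀ N i j, i ≤ j →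
    lift i (subst M j N) = subst (lift i M) (j + 1) (lift i N) := by
  induction M with
  | var m =>
    intro N i j h
    simp only [subst, lift]
    split_ifs <;> simp_all [lift, subst] <;> (try split_ifs) <;>
      first | omega | rfl | (congr 1; omega)
  | app A B ihA ihB => intro N i j h; simp [lift, subst, ihA _ _ _ h, ihB _ _ _ h]
  | lam A ih =>
    intro N i j h
    simp only [lift, subst]
    rw [ih _ (i+1) (j+1) (by omega), lift_lift _ 0 i (by omega)]

theorem subst_lift (M : Lam) : ∀ k N, subst (lift k M) k N = M := by
  induction M with
  | var m => intro k N; simp only [lift]; split_ifs <;> simp [subst] <;> (try split_ifs) <;>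
      first | omega | rfl | (congr 1; omega)
  | app A B ihA ihB => intro k N; simp [lift, subst, ihA, ihB]
  | lam A ih => intro k N; simp [lift, subst, ih]

theorem subst_subst (M : Lam) : ∀ u v i j, i ≤ j →
    subst (subst M i u) j v
      = subst (subst M (j + 1) (lift i v)) i (subst u j v) := by
  induction M with
  | var m =>
    intro u v i j h
    simp only [subst]
    split_ifs <;> simp_all [subst, subst_lift] <;> (try split_ifs) <;>
      first | omega | rfl | (congr 1; omega)
  | app A B ihA ihB => intro u v i j h; simp [subst, ihA _ _ _ _ h, ihB _ _ _ _ h]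
  | lam A ih =>
    intro u v i j h
    simp only [subst]
    rw [ih _ _ (i+1) (j+1) (by omega), lift_lift _ 0 i (by omega),
      ← lift_subst_lt _ _ 0 j (by omega)]

end Lam
namespace Lam

/-- Parallel reduction. -/
inductive Par : Lam → Lam → Prop
  | var (n : ℕ) : Par (var n) (var n)
  | lam {M M'} : Par M M' → Par (lam M) (lam M')
  | app {M M' N N'} : Par M M' → Par N N' → Par (app M N) (app M' N')
  | beta {M M' N N'} : Par M M' → Par N N' →
      Par (app (lam M) N) (subst M' 0 N')

theorem Par.refl : ∀ M, Par M M
  | .var n => .var n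
  | .app M N => .app (Par.refl M) (Par.refl N)
  | .lam M => .lam (Par.refl M)

theorem Par.lift {M M'} (h : Par M M') : ∀ d, Par (lift d M) (lift d M') := by
  induction h with
  | var n => intro d; unfold Lam.lift; split <;> exact .var _
  | lam _ ih => intro d; exact .lam (ih (d+1))
  | app _ _ ih1 ih2 => intro d; exact .app (ih1 d) (ih2 d)
  | @beta M M' N N' _ _ ih1 ih2 =>
    intro d
    have := Par.beta (ih1 (d+1)) (ih2 d)
    rwa [← lift_subst _ _ _ _ (by omega)] at this

theorem Par.subst {M M'} (h : Par M M') :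
    ∀ n {N N'}, Par N N' → Par (subst M n N) (subst M' n N') := by
  induction h with
  | var m =>
    intro n N N' hN
    unfold Lam.subst
    split_ifs <;> first | exact hN | exact .var _
  | lam _ ih => intro n N N' hN; exact .lam (ih (n+1) (hN.lift 0))
  | app _ _ ih1 ih2 => intro n N N' hN; exact .app (ih1 n hN) (ih2 n hN)
  | @beta P P' Q Q' _ _ ih1 ih2 =>
    intro n N N' hN
    have := Par.beta (ih1 (n+1) (hN.lift 0)) (ih2 n hN)
    show Par _ (Lam.subst (Lam.subst P' 0 Q') n N')
    rwa [subst_subst _ _ _ _ _ (by omega)]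

/-- Complete development. -/
def cd : Lam → Lam
  | .var n => .var n
  | .lam M => .lam (cd M)
  | .app (.lam M) N => subst (cd M) 0 (cd N)
  | .app (.var m) N => .app (.var m) (cd N)
  | .app (.app M1 M2) N => .app (cd (.app M1 M2)) (cd N)

theorem Par.toCd {M N} (h : Par M N) : Par N (Lam.cd M) := by
  induction h with
  | var n => exact .var n
  | lam _ ih => exact .lam ih
  | @app M M' N N' h1 _ ih1 ih2 =>
    cases M with
    | var m => cases h1; exact .app ih1 ih2
    | app A B => cases h1 <;> exact .app ih1 ih2
    | lam P =>
      cases h1 with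
      | lam hP =>
        cases ih1 with
        | lam hP' => exact .beta hP' ih2
  | beta _ _ ih1 ih2 => exact Par.subst ih1 0 ih2

theorem Par.diamond {M N1 N2} (h1 : Par M N1) (h2 : Par M N2) :
    ∃ L, Par N1 L ∧ Par N2 L := ⟨Lam.cd M, h1.toCd, h2.toCd⟩

def StepStar : Lam → Lam → Prop := Relation.ReflTransGen Step

theorem Step.par {M N} (h : Step M N) : Par M N := by
  induction h with
  | beta M N => exact .beta (Par.refl M) (Par.refl N)
  | appL N _ ih => exact .app ih (Par.refl N)
  | appR M _ ih => exact .app (Par.refl M) ih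
  | lam _ ih => exact .lam ih

theorem StepStar.appL {M M'} (N : Lam) (h : StepStar M M') :
    StepStar (app M N) (app M' N) := by
  induction h with
  | refl => exact .refl
  | tail _ h2 ih => exact ih.tail (.appL N h2)

theorem StepStar.appR (M : Lam) {N N'} (h : StepStar N N') :
    StepStar (app M N) (app M N') := by
  induction h with
  | refl => exact .refl
  | tail _ h2 ih => exact ih.tail (.appR M h2)

theorem StepStar.lam {M M'} (h : StepStar M M') :
    StepStar (Lam.lam M) (Lam.lam M') := by
  induction h with
  | refl => exact .refl
  | tail _ h2 ih => exact ih.tail (.lam h2)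

theorem Par.stepStar {M N} (h : Par M N) : StepStar M N := by
  induction h with
  | var n => exact .refl
  | lam _ ih => exact ih.lam
  | app _ _ ih1 ih2 => exact .trans (ih1.appL _) (StepStar.appR _ ih2)
  | @beta M M' N N' _ _ ih1 ih2 =>
    exact .tail (.trans (ih1.lam.appL _) (StepStar.appR _ ih2)) (.beta M' N')

/-- Strip lemma for parallel reduction star. -/
theorem Par.strip {M N P} (h : Par M N) (hs : Relation.ReflTransGen Par M P) :
    ∃ Q, Relation.ReflTransGen Par N Q ∧ Par P Q := by
  induction hs generalizing N with
  | refl => exact ⟨N, .refl, h⟩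
  | @tail b c _ hbc ih =>
    obtain ⟨Q, hNQ, hbQ⟩ := ih h
    obtain ⟨R, hQR, hcR⟩ := hbQ.diamond hbc
    exact ⟨R, hNQ.tail hQR, hcR⟩

theorem parStar_confluent {M N P} (h1 : Relation.ReflTransGen Par M N)
    (h2 : Relation.ReflTransGen Par M P) :
    ∃ Q, Relation.ReflTransGen Par N Q ∧ Relation.ReflTransGen Par P Q := by
  induction h1 generalizing P with
  | refl => exact ⟨P, h2, .refl⟩
  | @tail b c _ hbc ih =>
    obtain ⟨Q, hbQ, hPQ⟩ := ih h2
    obtain ⟨R, hcR, hQR⟩ := hbc.strip hbQ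
    exact ⟨R, hcR, hPQ.tail hQR⟩

theorem parStar_iff_stepStar {M N} :
    Relation.ReflTransGen Par M N ↔ StepStar M N := by
  constructor
  · intro h
    induction h with
    | refl => exact .refl
    | tail _ h2 ih => exact ih.trans h2.stepStar
  · intro h; exact Relation.ReflTransGen.mono (fun _ _ => Step.par) _ _ h

theorem stepStar_confluent {M N P} (h1 : StepStar M N) (h2 : StepStar M P) :
    ∃ Q, StepStar N Q ∧ StepStar P Q := by
  obtain ⟨Q, ha2, hb⟩ := parStar_confluent
    (parStar_iff_stepStar.mpr h1) (parStar_iff_stepStar.mpr h2)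
  exact ⟨Q, parStar_iff_stepStar.mp ha2, parStar_iff_stepStar.mp hb⟩

theorem StepStar.betaEq {M N} (h : StepStar M N) : BetaEq M N := by
  induction h with
  | refl => exact .refl _
  | tail _ h2 ih => exact ih.trans _ _ _ (.rel _ _ h2)

/-- Church–Rosser. -/
theorem BetaEq.cr {M N} (h : BetaEq M N) : ∃ L, StepStar M L ∧ StepStar N L := by
  induction h with
  | rel a b hab => exact ⟨b, .single hab, .refl⟩
  | refl a => exact ⟨a, .refl, .refl⟩
  | symm a b _ ih => obtain ⟨L, h1, h2⟩ := ih; exact ⟨L, h2, h1⟩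
  | trans a b c _ _ ih1 ih2 =>
    obtain ⟨L1, ha, hb1⟩ := ih1
    obtain ⟨L2, hb2, hc⟩ := ih2
    obtain ⟨Q, hQ1, hQ2⟩ := stepStar_confluent hb1 hb2
    exact ⟨Q, ha.trans hQ1, hc.trans hQ2⟩

end Lam
namespace Lam

theorem normal_no_step {M N} (h : Step M N) : ¬ IsBetaNormal M := by
  induction h with
  | beta M N => intro h; exact h
  | @appL M M' N _ ih =>
    intro h
    cases M with
    | var m => exact ih h.1
    | lam P => exact h
    | app A B => exact ih h.1
  | @appR M N N' _ ih =>
    intro h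
    cases M with
    | var m => exact ih h.2
    | lam P => exact h
    | app A B => exact ih h.2
  | lam _ ih => exact fun h => ih h

theorem normal_star {M N} (h : StepStar M N) (hM : IsBetaNormal M) : N = M := by
  induction h with
  | refl => rfl
  | tail h1 h2 ih => subst ih; exact absurd hM (normal_no_step h2)

theorem betaEq_normal_unique {M N} (h : BetaEq M N)
    (hM : IsBetaNormal M) (hN : IsBetaNormal N) : M = N := by
  obtain ⟨L, h1, h2⟩ := h.cr
  rw [← normal_star h1 hM, ← normal_star h2 hN]

theorem lift_of_free (M : Lam) : ∀ d, (∀ n, d ≤ n → ¬ HasFree M n) → lift d M = M := by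
  induction M with
  | var m =>
    intro d h
    have : m < d := by
      by_contra hc
      exact h m (by omega) rfl
    simp [lift, this]
  | app A B ihA ihB =>
    intro d h
    have := fun n hn => h n hn
    simp only [lift]
    rw [ihA d (fun n hn hf => h n hn (Or.inl hf)), ihB d (fun n hn hf => h n hn (Or.inr hf))]
  | lam A ih =>
    intro d h
    simp only [lift]
    rw [ih (d+1) (fun n hn hf => by
      cases n with
      | zero => omega
      | succ k => exact h k (by omega) hf)]

theorem subst_of_free (M : Lam) : ∀ d N, (∀ n, d ≤ n → ¬ HasFree M n) → subst M d N = M := by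
  induction M with
  | var m =>
    intro d N h
    have : m < d := by
      by_contra hc
      exact h m (by omega) rfl
    simp only [subst]
    rw [if_neg (by omega), if_neg (by omega)]
  | app A B ihA ihB =>
    intro d N h
    simp only [subst]
    rw [ihA d N (fun n hn hf => h n hn (Or.inl hf)), ihB d N (fun n hn hf => h n hn (Or.inr hf))]
  | lam A ih =>
    intro d N h
    simp only [subst]
    rw [ih (d+1) _ (fun n hn hf => by
      cases n with
      | zero => omega
      | succ k => exact h k (by omega) hf)]

theorem sysA_closed : ∀ k, Closed (sysA k) := by
  intro k
  induction k with
  | zero => intro n h; exact Nat.succ_ne_zero n (h.symm)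
  | succ k ih => intro n h; exact ih (n+1) h

theorem lift_sysA (k d : ℕ) : lift d (sysA k) = sysA k :=
  lift_of_free _ _ (fun n _ => sysA_closed k n)

theorem subst_sysA (k d : ℕ) (N : Lam) : subst (sysA k) d N = sysA k :=
  subst_of_free _ _ _ (fun n _ => sysA_closed k n)

theorem sysA_normal : ∀ k, IsBetaNormal (sysA k) := by
  intro k
  induction k with
  | zero => trivial
  | succ k ih => exact ih

theorem T_normal : IsBetaNormal T := trivial
theorem F_normal : IsBetaNormal F := trivial

theorem sysA_ne_F : ∀ k, 2 ≤ k → sysA k ≠ F := by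
  intro k hk
  match k, hk with
  | (j+2), _ =>
    show Lam.lam (Lam.lam (sysA j)) ≠ _
    intro h
    simp only [F, lam.injEq] at h
    cases j with
    | zero => simp [sysA, I] at h
    | succ i => cases i <;> simp [sysA, I] at h

end Lam
namespace Lam

/-- Simulation relation: `N` is obtained from `M` by replacing some subterms by
numerals `sysA j` with `j ≥ s + 2`. -/
inductive R : ℕ → Lam → Lam → Prop
  | var (s n) : R s (var n) (var n)
  | app {s M M' N N'} : R s M M' → R s N N' → R s (app M N) (app M' N')
  | lam {s M M'} : R s M M' → R s (lam M) (lam M')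
  | junk (M : Lam) {s j : ℕ} (hj : s + 2 ≤ j) : R s M (sysA j)

theorem R.refl (s : ℕ) : ∀ M, R s M M
  | .var n => .var s n
  | .app M N => .app (R.refl s M) (R.refl s N)
  | .lam M => .lam (R.refl s M)

theorem R.mono {s t M N} (h : R s M N) (hts : t ≤ s) : R t M N := by
  induction h with
  | var => exact .var _ _
  | app _ _ ih1 ih2 => exact .app (ih1 hts) (ih2 hts)
  | lam _ ih => exact .lam (ih hts)
  | junk j hj => exact .junk _ (by omega)

theorem R.lift {s M N} (h : R s M N) : ∀ d, R s (lift d M) (lift d N) := by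
  induction h with
  | var => intro d; unfold Lam.lift; split <;> exact .var _ _
  | app _ _ ih1 ih2 => intro d; exact .app (ih1 d) (ih2 d)
  | lam _ ih => intro d; exact .lam (ih (d+1))
  | junk j hj => intro d; rw [lift_sysA]; exact .junk _ hj

theorem R.subst {s M M'} (h : R s M M') :
    ∀ n {N N'}, R s N N' → R s (subst M n N) (subst M' n N') := by
  induction h with
  | var =>
    intro n N N' hN
    unfold Lam.subst
    split_ifs <;> first | exact hN | exact .var _ _
  | app _ _ ih1 ih2 => intro n N N' hN; exact .app (ih1 n hN) (ih2 n hN)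
  | lam _ ih => intro n N N' hN; exact .lam (ih (n+1) (hN.lift 0))
  | junk j hj => intro n N N' hN; rw [subst_sysA]; exact .junk _ hj

theorem R.sim {s M M' N} (h : R (s+1) M N) (hstep : Step M M') :
    ∃ N', StepStar N N' ∧ R s M' N' := by
  induction hstep generalizing N s with
  | @beta P Q =>
    cases h with
    | junk hj => exact ⟨_, .refl, .junk _ (show s + 2 ≤ _ by omega)⟩
    | @app _ _ N1 _ N2 h1 h2 =>
      cases h1 with
      | lam hP => exact ⟨_, .single (.beta _ _), (hP.subst 0 h2).mono (by omega)⟩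
      | @junk _ _ j hj =>
        match j, hj with
        | (j+1), hj =>
          refine ⟨sysA j, .single ?_, .junk _ (show s + 2 ≤ j by omega)⟩
          have := Step.beta (sysA j) N2
          rwa [subst_sysA] at this
  | @appL P P' Q hP ih =>
    cases h with
    | junk hj => exact ⟨_, .refl, .junk _ (show s + 2 ≤ _ by omega)⟩
    | app h1 h2 =>
      obtain ⟨N1', hs1, hr1⟩ := ih h1
      exact ⟨_, hs1.appL _, .app hr1 (h2.mono (by omega))⟩
  | @appR P Q Q' hQ ih =>
    cases h with
    | junk hj => exact ⟨_, .refl, .junk _ (show s + 2 ≤ _ by omega)⟩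
    | app h1 h2 =>
      obtain ⟨N2', hs2, hr2⟩ := ih h2
      exact ⟨_, StepStar.appR _ hs2, .app (h1.mono (by omega)) hr2⟩
  | @lam P P' hP ih =>
    cases h with
    | junk hj => exact ⟨_, .refl, .junk _ (show s + 2 ≤ _ by omega)⟩
    | lam h1 =>
      obtain ⟨N1', hs1, hr1⟩ := ih h1
      exact ⟨_, hs1.lam, .lam hr1⟩

theorem R.simStar {M M'} (h : StepStar M M') :
    ∃ m, ∀ s N, R (s + m) M N → ∃ N', StepStar N N' ∧ R s M' N' := by
  induction h with
  | refl => exact ⟨0, fun s N hR => ⟨N, .refl, hR⟩⟩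
  | @tail b c _ hbc ih =>
    obtain ⟨m, hm⟩ := ih
    refine ⟨m + 1, fun s N hR => ?_⟩
    obtain ⟨N1, hs1, hr1⟩ := hm (s+1) N (by
      have : s + (m+1) = (s+1) + m := by omega
      rwa [this] at hR)
    obtain ⟨N2, hs2, hr2⟩ := hr1.sim hbc
    exact ⟨N2, hs1.trans hs2, hr2⟩

theorem R.analysis {N} (h : R 0 T N) : IsBetaNormal N ∧ N ≠ F := by
  have hj : ∀ j : ℕ, 2 ≤ j → IsBetaNormal (sysA j) ∧ sysA j ≠ F :=
    fun j h2 => ⟨sysA_normal j, sysA_ne_F j h2⟩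
  cases h with
  | junk hji => exact hj _ (by omega)
  | lam h1 =>
    cases h1 with
    | @junk _ _ j hji =>
      have := hj (j+1) (by omega)
      exact ⟨this.1, fun hF => this.2 (by
        rw [show sysA (j+1) = Lam.lam (sysA j) from rfl, hF])⟩
    | lam h2 =>
      cases h2 with
      | var => exact ⟨T_normal, by decide⟩
      | @junk _ _ j hji =>
        have := hj (j+2) (by omega)
        exact ⟨this.1, fun hF => this.2 (by
          rw [show sysA (j+2) = Lam.lam (Lam.lam (sysA j)) from rfl, hF])⟩

/-- The numeral system `a` has no Zero Test. -/
theorem noZeroTest (Z : Lam) (h0 : BetaEq (app Z (sysA 0)) T)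
    (hs : ∀ n, BetaEq (app Z (sysA (n+1))) F) : False := by
  obtain ⟨L, hZL, hTL⟩ := h0.cr
  rw [normal_star hTL T_normal] at hZL
  obtain ⟨m, hm⟩ := R.simStar hZL
  have hR : R (0 + m) (app Z (sysA 0)) (app Z (sysA (m+2))) :=
    .app (R.refl _ _) (.junk _ (by omega))
  obtain ⟨N, hsteps, hRN⟩ := hm 0 _ hR
  obtain ⟨hnorm, hne⟩ := R.analysis hRN
  have hNF : BetaEq N F :=
    ((hsteps.betaEq).symm _ _).trans _ _ _ (hs (m+1))
  exact hne (betaEq_normal_unique hNF hnorm F_normal)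

end Lam
namespace Lam

theorem BetaEq.appLeft {M M'} (N : Lam) (h : BetaEq M M') :
    BetaEq (app M N) (app M' N) := by
  induction h with
  | rel a b hab => exact .rel _ _ (.appL N hab)
  | refl a => exact .refl _
  | symm a b _ ih => exact ih.symm _ _
  | trans a b c _ _ ih1 ih2 => exact ih1.trans _ _ _ ih2

theorem subst_body (P : Lam) (k : ℕ) :
    subst (app (app (lift 0 P) (pair F (var 0))) T) 0 (sysA k)
      = app (app P (sysB (k + 1))) T := by
  show app (app (subst (lift 0 P) 0 (sysA k))
      (subst (pair F (var 0)) 0 (sysA k))) (subst T 0 (sysA k))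
    = _
  rw [subst_lift]
  rfl

theorem step_start (P : Lam) (k : ℕ) :
    Step (app (lam (app (app (lift 0 P) (pair F (var 0))) T)) (sysA k))
      (app (app P (sysB (k + 1))) T) := by
  have := Step.beta (app (app (lift 0 P) (pair F (var 0))) T) (sysA k)
  rwa [subst_body] at this

theorem appB0 : StepStar (app (sysB 0) T) T := by
  have s1 : Step (app (sysB 0) T) (app (app T T) I) := Step.beta _ _
  have s2 : Step (app (app T T) I) (app (Lam.lam T) I) := Step.appL I (Step.beta _ _)
  have s3 : Step (app (Lam.lam T) I) T := Step.beta _ _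
  exact .tail (.tail (.single s1) s2) s3

theorem appBS (n : ℕ) : StepStar (app (sysB (n + 1)) T) F := by
  have s1 : Step (app (sysB (n + 1)) T) (app (app T F) (sysA n)) := by
    have e : Lam.subst (app (app (var 0) (lift 0 F)) (lift 0 (sysA n))) 0 T
        = app (app T F) (sysA n) := by
      show app (app (Lam.subst (var 0) 0 T) (Lam.subst (lift 0 F) 0 T))
          (Lam.subst (lift 0 (sysA n)) 0 T) = _
      rw [subst_lift, subst_lift]
      rfl
    have s := Step.beta (app (app (var 0) (lift 0 F)) (lift 0 (sysA n))) T
    rw [e] at s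
    have h : sysB (n + 1) = Lam.lam (app (app (var 0) (lift 0 F)) (lift 0 (sysA n))) := rfl
    rw [h]
    exact s
  have s2 : Step (app (app T F) (sysA n)) (app (Lam.lam F) (sysA n)) :=
    Step.appL _ (Step.beta _ _)
  have s3 : Step (app (Lam.lam F) (sysA n)) F := by
    have := Step.beta F (sysA n)
    rwa [show Lam.subst F 0 (sysA n) = F from rfl] at this
  exact .tail (.tail (.single s1) s2) s3

theorem zeroTest_of_pred (P : Lam) (hP : Closed P)
    (hPred : ∀ n, BetaEq (app P (sysB (n + 1))) (sysB n)) :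
    Closed (lam (app (app (lift 0 P) (pair F (var 0))) T)) ∧
    BetaEq (app (lam (app (app (lift 0 P) (pair F (var 0))) T)) (sysA 0)) T ∧
    ∀ n, BetaEq (app (lam (app (app (lift 0 P) (pair F (var 0))) T)) (sysA (n + 1))) F := by
  refine ⟨?_, ?_, ?_⟩
  · intro n hf
    rw [lift_of_free P 0 (fun k _ => hP k)] at hf
    rcases hf with (hf | hf) | hf
    · exact hP _ hf
    · simp only [pair, HasFree, lift, F, T] at hf
      rcases hf with (hf | hf) | hf <;> simp [HasFree] at hf <;> omega
    · simp only [T, HasFree] at hf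
      omega
  · exact (Relation.EqvGen.rel _ _ (step_start P 0)).trans _ _ _
      (((hPred 0).appLeft T).trans _ _ _ appB0.betaEq)
  · intro n
    exact (Relation.EqvGen.rel _ _ (step_start P (n + 1))).trans _ _ _
      (((hPred (n + 1)).appLeft T).trans _ _ _ (appBS n).betaEq)

end Lam

/-- If `P` is a closed Predecessor for the numeral system `b`, then
`P' = λn.(P <F, n> T)` is a Zero Test for the numeral system `a`; consequently
`b` has no Predecessor. -/
theorem statement5 :
    (∀ P : Lam, Lam.Closed P → (∀ n, Lam.BetaEq (Lam.app P (Lam.sysB (n + 1))) (Lam.sysB n)) →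
      Lam.Closed (Lam.lam (Lam.app (Lam.app (Lam.lift 0 P) (Lam.pair Lam.F (Lam.var 0))) Lam.T)) ∧
      Lam.BetaEq
        (Lam.app (Lam.lam (Lam.app (Lam.app (Lam.lift 0 P) (Lam.pair Lam.F (Lam.var 0))) Lam.T))
          (Lam.sysA 0)) Lam.T ∧
      ∀ n, Lam.BetaEq
        (Lam.app (Lam.lam (Lam.app (Lam.app (Lam.lift 0 P) (Lam.pair Lam.F (Lam.var 0))) Lam.T))
          (Lam.sysA (n + 1))) Lam.F) ∧
    ¬ ∃ P, Lam.Closed P ∧ ∀ n, Lam.BetaEq (Lam.app P (Lam.sysB (n + 1))) (Lam.sysB n) := by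
  refine ⟨Lam.zeroTest_of_pred, ?_⟩
  rintro ⟨P, hP, hPred⟩
  obtain ⟨-, h0, hs⟩ := Lam.zeroTest_of_pred P hP hPred
  exact Lam.noZeroTest _ h0 hs
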